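/- For every n ≥ 0 and q ≥ 1 and any units a_1, ..., a_n in Z/qZ, there exists a partition of the power set of [n] into C(n, ⌊n/2⌋)_q blocks such that within each block, the subset sums ∑_{i∈I} a_i (mod q) are pairwise distinct. -/

import Mathlib

/-- The mod-q binomial coefficient `C(n,s)_q = ∑_{0 ≤ j ≤ n, j ≡ s (mod q)} C(n,j)`. -/
def modBinom (n q : ℕ) (s : ℤ) : ℕ :=
  ∑ j ∈ Finset.range (n + 1), if ((j : ℤ) - s) % (q : ℤ) = 0 then n.choose j else 0

/-- The sum of the `k` middle mod-`q` binomial coefficients,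
`_{(n-k)/2 ≤ j < (n+k)/2} C(n,j)_q` (the integers `j` in question all lie in `[-q, n+q]`
when `k ≤ q`). -/
noncomputable def middleSum (n q k : ℕ) : ℕ :=
  ∑ j ∈ Finset.Icc (-(q : ℤ)) ((n : ℤ) + q),
    if (n : ℤ) - k ≤ 2 * j ∧ 2 * j < (n : ℤ) + k then modBinom n q j else 0


def eMid (n i : ℕ) : ℤ :=
  if Even (n + i) then ((n : ℤ) + i) / 2 else ((n : ℤ) - i - 1) / 2

lemma modBinom_congr {n q : ℕ} {s t : ℤ} (h : (q:ℤ) ∣ (s - t)) :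
    modBinom n q s = modBinom n q t := by
  unfold modBinom
  refine Finset.sum_congr rfl fun j _ => if_congr ?_ rfl rfl
  rw [← Int.dvd_iff_emod_eq_zero, ← Int.dvd_iff_emod_eq_zero]
  constructor
  · intro h'
    have h2 := dvd_add h' h
    have h3 : (↑j - s) + (s - t) = (j:ℤ) - t := by ring
    rwa [h3] at h2
  · intro h'
    have h2 := dvd_sub h' h
    have h3 : (↑j - t) - (s - t) = (j:ℤ) - s := by ring
    rwa [h3] at h2

lemma modBinom_succ (n q : ℕ) (s : ℤ) :
    modBinom (n+1) q s = modBinom n q s + modBinom n q (s-1) := by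
  unfold modBinom
  rw [Finset.sum_range_succ'
    (fun j => if ((j : ℤ) - s) % (q : ℤ) = 0 then (n+1).choose j else 0) (n+1)]
  have hA : (∑ k ∈ Finset.range (n+1),
        if (((k+1:ℕ) : ℤ) - s) % (q : ℤ) = 0 then (n+1).choose (k+1) else 0)
      = (∑ i ∈ Finset.range (n+1),
          if (((i:ℕ) : ℤ) - (s-1)) % (q : ℤ) = 0 then n.choose i else 0)
        + (∑ i ∈ Finset.range (n+1),
          if (((i+1:ℕ) : ℤ) - s) % (q : ℤ) = 0 then n.choose (i+1) else 0) := by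
    rw [← Finset.sum_add_distrib]
    refine Finset.sum_congr rfl fun i _ => ?_
    have hc : (((i+1:ℕ) : ℤ) - s) % (q : ℤ) = (((i:ℕ) : ℤ) - (s-1)) % (q : ℤ) := by
      push_cast; congr 1; ring
    rw [Nat.choose_succ_succ]
    split_ifs with hh1 hh2 hh2
    · ring
    · rw [hc] at hh1; exact absurd hh1 hh2
    · rw [← hc] at hh2; exact absurd hh2 hh1
    · ring
  have hB : (∑ i ∈ Finset.range (n+1),
        if (((i+1:ℕ) : ℤ) - s) % (q : ℤ) = 0 then n.choose (i+1) else 0)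
      + (if (((0:ℕ) : ℤ) - s) % (q : ℤ) = 0 then (n+1).choose 0 else 0)
      = ∑ j ∈ Finset.range (n+1), if ((j : ℤ) - s) % (q : ℤ) = 0 then n.choose j else 0 := by
    have h0 : (if (((0:ℕ) : ℤ) - s) % (q : ℤ) = 0 then (n+1).choose 0 else 0)
        = (if (((0:ℕ) : ℤ) - s) % (q : ℤ) = 0 then n.choose 0 else 0) := by
      simp
    rw [h0, ← Finset.sum_range_succ'
      (fun j => if ((j : ℤ) - s) % (q : ℤ) = 0 then n.choose j else 0) (n+1)]
    rw [Finset.sum_range_succ]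
    simp
  rw [hA]
  omega

lemma eMid_zero (n : ℕ) : eMid n 0 = ((n / 2 : ℕ) : ℤ) := by
  unfold eMid
  split_ifs with h <;> rw [Nat.even_iff] at h <;> omega

lemma eMid_pair (n i : ℕ) :
    (eMid (n+1) i = eMid n (i+1) ∧ eMid (n+1) i - 1 = eMid n (i-1)) ∨
    (eMid (n+1) i = eMid n (i-1) ∧ eMid (n+1) i - 1 = eMid n (i+1)) := by
  unfold eMid
  split_ifs with h1 h2 h3 h3 h2 h3 h3 <;>
    rw [Nat.even_iff] at * <;> omega

lemma eMid_wrap (n q : ℕ) (hq : 1 ≤ q) : (q:ℤ) ∣ (eMid n q - eMid n (q-1)) := by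
  have h : eMid n q - eMid n (q-1) = q ∨ eMid n q - eMid n (q-1) = -q := by
    unfold eMid
    split_ifs with h1 h2 h2 <;> rw [Nat.even_iff] at * <;> omega
  rcases h with h | h <;> rw [h] <;> simp

lemma modBinom_zero (q : ℕ) (s : ℤ) : modBinom 0 q s = if (q:ℤ) ∣ s then 1 else 0 := by
  unfold modBinom
  rw [Finset.sum_range_one]
  have h : (((0:ℕ):ℤ) - s) % (q:ℤ) = 0 ↔ (q:ℤ) ∣ s := by
    rw [← Int.dvd_iff_emod_eq_zero]
    push_cast
    rw [zero_sub, dvd_neg]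
  rw [if_congr h rfl rfl]
  simp

lemma modBinom_zero_eMid_zero (q : ℕ) : modBinom 0 q (eMid 0 0) = 1 := by
  have h : eMid 0 0 = 0 := by unfold eMid; norm_num
  rw [h, modBinom_zero]
  simp

lemma modBinom_zero_eMid (q i : ℕ) (h1 : 1 ≤ i) (h2 : i ≤ q - 1) (hq : 1 ≤ q) :
    modBinom 0 q (eMid 0 i) = 0 := by
  rw [modBinom_zero, if_neg]
  intro hd
  have hb : (1 ≤ eMid 0 i ∧ eMid 0 i < q) ∨ (1 ≤ -eMid 0 i ∧ -eMid 0 i < q) := by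
    unfold eMid
    split_ifs with h <;> rw [Nat.even_iff] at h <;> omega
  rcases hb with ⟨ha, hb⟩ | ⟨ha, hb⟩
  · have := Int.le_of_dvd (by omega) hd
    omega
  · have := Int.le_of_dvd (by omega) (dvd_neg.mpr hd)
    omega

lemma closure_lemma {q : ℕ} [NeZero q] (T : Finset (ZMod q)) (hT : T.Nonempty)
    {u : ZMod q} (hu : IsUnit u) (hcl : ∀ t ∈ T, t + u ∈ T) : ∀ z : ZMod q, z ∈ T := by
  obtain ⟨t, ht⟩ := hT
  obtain ⟨v, hv⟩ := hu
  have hm : ∀ m : ℕ, t + (m : ZMod q) * u ∈ T := by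
    intro m
    induction m with
    | zero => simpa using ht
    | succ k ihk =>
      have hh := hcl _ ihk
      have he : t + ((k:ZMod q)) * u + u = t + ((k+1 : ℕ) : ZMod q) * u := by
        push_cast; ring
      rwa [he] at hh
  intro z
  have key := hm ((z - t) * ↑v⁻¹).val
  have hval : ((((z - t) * ↑v⁻¹).val : ℕ) : ZMod q) = (z - t) * ↑v⁻¹ := by
    simp [ZMod.natCast_val, ZMod.cast_id]
  rw [hval] at key
  have hmul : (z - t) * ↑v⁻¹ * u = z - t := by
    rw [← hv, mul_assoc]
    simp
  rw [hmul] at key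
  simpa using key

lemma exists_good_partition (n q : ℕ) [NeZero q] (a : Fin n → ZMod q)
    (ha : ∀ i, IsUnit (a i)) (s : Finset (Fin n)) :
    ∃ P : Finset (Finset (Finset (Fin n))),
      (∀ b ∈ P, b.Nonempty) ∧
      (∀ b ∈ P, ∀ I ∈ b, I ⊆ s) ∧
      (∀ I : Finset (Fin n), I ⊆ s → ∃ b ∈ P, I ∈ b) ∧
      (∀ b ∈ P, ∀ c ∈ P, ∀ I : Finset (Fin n), I ∈ b → I ∈ c → b = c) ∧
      (∀ b ∈ P, ∀ I ∈ b, ∀ J ∈ b, (∑ i ∈ I, a i) = (∑ i ∈ J, a i) → I = J) ∧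
      (∀ j : ℕ, 1 ≤ j → j ≤ q → (P.filter fun b => j ≤ b.card).card
          = modBinom s.card q (eMid s.card (j-1))) := by
  classical
  have hq : 1 ≤ q := Nat.pos_of_ne_zero (NeZero.ne q)
  induction s using Finset.induction_on with
  | empty =>
    refine ⟨{{(∅ : Finset (Fin n))}}, ?_, ?_, ?_, ?_, ?_, ?_⟩
    · intro b hb
      simp only [Finset.mem_singleton] at hb
      subst hb; exact ⟨∅, Finset.mem_singleton_self _⟩
    · intro b hb I hI
      simp only [Finset.mem_singleton] at hb
      subst hb
      simp only [Finset.mem_singleton] at hI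
      subst hI; exact Finset.Subset.refl _
    · intro I hI
      rw [Finset.subset_empty] at hI
      exact ⟨{∅}, Finset.mem_singleton_self _, by simp [hI]⟩
    · intro b hb c hc I _ _
      simp only [Finset.mem_singleton] at hb hc
      rw [hb, hc]
    · intro b hb I hI J hJ _
      simp only [Finset.mem_singleton] at hb
      subst hb
      simp only [Finset.mem_singleton] at hI hJ
      rw [hI, hJ]
    · intro j hj1 hjq
      simp only [Finset.card_empty]
      rcases eq_or_lt_of_le hj1 with h | h
      · have heq : ({{(∅ : Finset (Fin n))}} : Finset (Finset (Finset (Fin n)))).filter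
            (fun b => j ≤ b.card) = {{(∅ : Finset (Fin n))}} := by
          rw [Finset.filter_eq_self]
          intro b hb
          simp only [Finset.mem_singleton] at hb
          subst hb
          simp [← h]
        rw [heq, ← h]
        simp [modBinom_zero_eMid_zero q]
      · have heq : ({{(∅ : Finset (Fin n))}} : Finset (Finset (Finset (Fin n)))).filter
            (fun b => j ≤ b.card) = ∅ := by
          rw [Finset.filter_eq_empty_iff]
          intro b hb
          simp only [Finset.mem_singleton] at hb
          subst hb
          simp
          omega
        rw [heq]
        rw [modBinom_zero_eMid q (j-1) (by omega) (by omega) hq]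
        simp
  | @insert x s hx ih =>
    obtain ⟨P, h1, h2, h3, h4, h5, h6⟩ := ih
    classical
    have hq : 1 ≤ q := Nat.pos_of_ne_zero (NeZero.ne q)
    -- basic facts
    have hnotxI : ∀ b ∈ P, ∀ I ∈ b, x ∉ I := fun b hb I hI hxI => hx (h2 b hb I hI hxI)
    have hcard_le : ∀ b ∈ P, b.card ≤ q := by
      intro b hb
      have himg : (b.image (fun J => ∑ i ∈ J, a i)).card = b.card :=
        Finset.card_image_of_injOn (fun I hI J hJ hIJ => h5 b hb I hI J hJ hIJ)
      calc b.card = (b.image (fun J => ∑ i ∈ J, a i)).card := himg.symm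
        _ ≤ Fintype.card (ZMod q) := Finset.card_le_univ _
        _ = q := ZMod.card q
    have hpick : ∀ b, b ∈ P → b.card < q →
        ∃ I, I ∈ b ∧ (∑ i ∈ I, a i) + a x ∉ b.image (fun J => ∑ i ∈ J, a i) := by
      intro b hb hlt
      by_contra h'
      push_neg at h'
      have hcl : ∀ t ∈ b.image (fun J => ∑ i ∈ J, a i),
          t + a x ∈ b.image (fun J => ∑ i ∈ J, a i) := by
        intro t ht
        obtain ⟨I, hI, rfl⟩ := Finset.mem_image.mp ht
        exact h' I hI
      have huniv := closure_lemma _ ((h1 b hb).image _) (ha x) hcl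
      have : (b.image (fun J => ∑ i ∈ J, a i)).card = q := by
        rw [Finset.eq_univ_iff_forall.mpr huniv, Finset.card_univ, ZMod.card]
      have himg : (b.image (fun J => ∑ i ∈ J, a i)).card = b.card :=
        Finset.card_image_of_injOn (fun I hI J hJ hIJ => h5 b hb I hI J hJ hIJ)
      omega
    choose! pick hpickmem hpicknot using hpick
    set c1 : Finset (Finset (Fin n)) → Finset (Finset (Fin n)) :=
      fun b => if b.card < q then insert (insert x (pick b)) b else b with hc1def
    set c2 : Finset (Finset (Fin n)) → Finset (Finset (Fin n)) :=
      fun b => if b.card < q then (b.image (insert x)).erase (insert x (pick b))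
        else b.image (insert x) with hc2def
    set chs : Finset (Finset (Fin n)) → Finset (Finset (Finset (Fin n))) :=
      fun b => ({c1 b, c2 b} : Finset _).filter (fun c => c.Nonempty) with hchsdef
    -- structural facts
    have hxpick : ∀ b ∈ P, b.card < q → x ∉ pick b := by
      intro b hb hlt
      exact hnotxI b hb (pick b) (hpickmem b hb hlt)
    have hmemc1 : ∀ b ∈ P, ∀ J ∈ c1 b, J ∈ b ∨ (b.card < q ∧ J = insert x (pick b)) := by
      intro b hb J hJ
      rw [hc1def] at hJ
      simp only at hJ
      by_cases hlt : b.card < q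
      · rw [if_pos hlt] at hJ
        rcases Finset.mem_insert.mp hJ with h | h
        · exact Or.inr ⟨hlt, h⟩
        · exact Or.inl h
      · rw [if_neg hlt] at hJ
        exact Or.inl hJ
    have hmemc2 : ∀ b ∈ P, ∀ J ∈ c2 b, ∃ J₀ ∈ b, J = insert x J₀ := by
      intro b hb J hJ
      rw [hc2def] at hJ
      simp only at hJ
      by_cases hlt : b.card < q
      · rw [if_pos hlt] at hJ
        obtain ⟨J₀, hJ₀, rfl⟩ := Finset.mem_image.mp (Finset.mem_of_mem_erase hJ)
        exact ⟨J₀, hJ₀, rfl⟩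
      · rw [if_neg hlt] at hJ
        obtain ⟨J₀, hJ₀, rfl⟩ := Finset.mem_image.mp hJ
        exact ⟨J₀, hJ₀, rfl⟩
    have hxc2 : ∀ b ∈ P, ∀ J ∈ c2 b, x ∈ J := by
      intro b hb J hJ
      obtain ⟨J₀, _, rfl⟩ := hmemc2 b hb J hJ
      exact Finset.mem_insert_self x J₀
    have hchspair : ∀ b, ∀ c ∈ chs b, c = c1 b ∨ c = c2 b := by
      intro b c hc
      rw [hchsdef] at hc
      simp only [Finset.mem_filter, Finset.mem_insert, Finset.mem_singleton] at hc
      exact hc.1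
    have hchsne : ∀ b, ∀ c ∈ chs b, c.Nonempty := by
      intro b c hc
      rw [hchsdef] at hc
      exact (Finset.mem_filter.mp hc).2
    have htrace : ∀ b ∈ P, ∀ c ∈ chs b, ∀ J ∈ c, J.erase x ∈ b := by
      intro b hb c hc J hJ
      rcases hchspair b c hc with rfl | rfl
      · rcases hmemc1 b hb J hJ with h | ⟨hlt, rfl⟩
        · rwa [Finset.erase_eq_of_notMem (hnotxI b hb J h)]
        · rw [Finset.erase_insert (hxpick b hb hlt)]
          exact hpickmem b hb hlt
      · obtain ⟨J₀, hJ₀, rfl⟩ := hmemc2 b hb J hJ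
        rw [Finset.erase_insert (hnotxI b hb J₀ hJ₀)]
        exact hJ₀
    have hc1c2 : ∀ b ∈ P, ∀ J, J ∈ c1 b → J ∈ c2 b → False := by
      intro b hb J hJ1 hJ2
      have hxJ := hxc2 b hb J hJ2
      rcases hmemc1 b hb J hJ1 with h | ⟨hlt, rfl⟩
      · exact hnotxI b hb J h hxJ
      · rw [hc2def] at hJ2
        simp only [if_pos hlt] at hJ2
        exact (Finset.mem_erase.mp hJ2).1 rfl
    refine ⟨P.biUnion chs, ?_, ?_, ?_, ?_, ?_, ?_⟩
    · -- nonempty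
      intro c hc
      obtain ⟨b, _, hcb⟩ := Finset.mem_biUnion.mp hc
      exact hchsne b c hcb
    · -- subsets
      intro c hc J hJ
      obtain ⟨b, hb, hcb⟩ := Finset.mem_biUnion.mp hc
      have h := htrace b hb c hcb J hJ
      intro i hi
      by_cases hix : i = x
      · rw [hix]; exact Finset.mem_insert_self x s
      · exact Finset.mem_insert_of_mem (h2 b hb _ h (Finset.mem_erase.mpr ⟨hix, hi⟩))
    · -- cover
      intro I hIs
      have hI0s : I.erase x ⊆ s := by
        intro i hi
        have hix := (Finset.mem_erase.mp hi).1
        rcases Finset.mem_insert.mp (hIs (Finset.mem_erase.mp hi).2) with h | h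
        · exact absurd h hix
        · exact h
      obtain ⟨b, hb, hmem⟩ := h3 (I.erase x) hI0s
      by_cases hxI : x ∈ I
      · have hIeq : insert x (I.erase x) = I := Finset.insert_erase hxI
        by_cases hlt : b.card < q
        · by_cases hp : I.erase x = pick b
          · refine ⟨c1 b, Finset.mem_biUnion.mpr ⟨b, hb, ?_⟩, ?_⟩
            · rw [hchsdef]
              refine Finset.mem_filter.mpr ⟨Finset.mem_insert_self _ _, ?_⟩
              rw [hc1def]
              simp only [if_pos hlt]
              exact ⟨insert x (pick b), Finset.mem_insert_self _ _⟩
            · rw [hc1def]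
              simp only [if_pos hlt]
              rw [← hp, hIeq]
              exact Finset.mem_insert_self _ _
          · have hIc2 : I ∈ c2 b := by
              rw [hc2def]
              simp only [if_pos hlt]
              refine Finset.mem_erase.mpr ⟨?_, Finset.mem_image.mpr ⟨I.erase x, hmem, hIeq⟩⟩
              intro hcon
              apply hp
              rw [hcon, Finset.erase_insert (hxpick b hb hlt)]
            refine ⟨c2 b, Finset.mem_biUnion.mpr ⟨b, hb, ?_⟩, hIc2⟩
            rw [hchsdef]
            exact Finset.mem_filter.mpr ⟨by simp, ⟨I, hIc2⟩⟩
        · have hIc2 : I ∈ c2 b := by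
            rw [hc2def]
            simp only [if_neg hlt]
            exact Finset.mem_image.mpr ⟨I.erase x, hmem, hIeq⟩
          refine ⟨c2 b, Finset.mem_biUnion.mpr ⟨b, hb, ?_⟩, hIc2⟩
          rw [hchsdef]
          exact Finset.mem_filter.mpr ⟨by simp, ⟨I, hIc2⟩⟩
      · have hIeq : I.erase x = I := Finset.erase_eq_of_notMem hxI
        rw [hIeq] at hmem
        have hIc1 : I ∈ c1 b := by
          rw [hc1def]
          by_cases hlt : b.card < q
          · simp only [if_pos hlt]
            exact Finset.mem_insert_of_mem hmem
          · simp only [if_neg hlt]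
            exact hmem
        refine ⟨c1 b, Finset.mem_biUnion.mpr ⟨b, hb, ?_⟩, hIc1⟩
        rw [hchsdef]
        exact Finset.mem_filter.mpr ⟨Finset.mem_insert_self _ _, ⟨I, hIc1⟩⟩
    · -- disjoint
      intro c hc c' hc' J hJ hJ'
      obtain ⟨b, hb, hcb⟩ := Finset.mem_biUnion.mp hc
      obtain ⟨b', hb', hcb'⟩ := Finset.mem_biUnion.mp hc'
      have hbb : b = b' := h4 b hb b' hb' (J.erase x)
        (htrace b hb c hcb J hJ) (htrace b' hb' c' hcb' J hJ')
      subst hbb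
      rcases hchspair b c hcb with rfl | rfl <;> rcases hchspair b c' hcb' with rfl | rfl
      · rfl
      · exact absurd (hc1c2 b hb J hJ hJ') id
      · exact absurd (hc1c2 b hb J hJ' hJ) id
      · rfl
    · -- sums
      intro c hc I hI J hJ hsum
      obtain ⟨b, hb, hcb⟩ := Finset.mem_biUnion.mp hc
      rcases hchspair b c hcb with rfl | rfl
      · rcases hmemc1 b hb I hI with hIb | ⟨hlt, rfl⟩ <;>
          rcases hmemc1 b hb J hJ with hJb | ⟨hlt', rfl⟩
        · exact h5 b hb I hIb J hJb hsum
        · exfalso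
          apply hpicknot b hb hlt'
          rw [Finset.sum_insert (hxpick b hb hlt')] at hsum
          have heq : ∑ i ∈ pick b, a i + a x = ∑ i ∈ I, a i := by
            rw [add_comm]; exact hsum.symm
          rw [heq]
          exact Finset.mem_image.mpr ⟨I, hIb, rfl⟩
        · exfalso
          apply hpicknot b hb hlt
          rw [Finset.sum_insert (hxpick b hb hlt)] at hsum
          have heq : ∑ i ∈ pick b, a i + a x = ∑ i ∈ J, a i := by
            rw [add_comm]; exact hsum
          rw [heq]
          exact Finset.mem_image.mpr ⟨J, hJb, rfl⟩
        · rfl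
      · obtain ⟨I₀, hI₀, rfl⟩ := hmemc2 b hb I hI
        obtain ⟨J₀, hJ₀, rfl⟩ := hmemc2 b hb J hJ
        rw [Finset.sum_insert (hnotxI b hb I₀ hI₀), Finset.sum_insert (hnotxI b hb J₀ hJ₀)] at hsum
        have := h5 b hb I₀ hI₀ J₀ hJ₀ (add_left_cancel hsum)
        rw [this]
    · -- count
      intro j hj1 hjq
      have hcardins : (insert x s).card = s.card + 1 := Finset.card_insert_of_notMem hx
      have himgcard : ∀ b ∈ P, (b.image (insert x)).card = b.card := by
        intro b hb
        apply Finset.card_image_of_injOn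
        intro I hI J hJ hIJ
        rw [← Finset.erase_insert (hnotxI b hb I hI), ← Finset.erase_insert (hnotxI b hb J hJ),
          hIJ]
      have hc1card : ∀ b ∈ P, b.card < q → (c1 b).card = b.card + 1 := by
        intro b hb hlt
        rw [hc1def]
        simp only [if_pos hlt]
        rw [Finset.card_insert_of_notMem]
        intro hcon
        exact hnotxI b hb _ hcon (Finset.mem_insert_self x _)
      have hc2card : ∀ b ∈ P, b.card < q → (c2 b).card = b.card - 1 := by
        intro b hb hlt
        rw [hc2def]
        simp only [if_pos hlt]
        rw [Finset.card_erase_of_mem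
          (Finset.mem_image.mpr ⟨pick b, hpickmem b hb hlt, rfl⟩), himgcard b hb]
      have hc1card' : ∀ b ∈ P, ¬ b.card < q → (c1 b).card = b.card := by
        intro b hb hlt
        rw [hc1def]
        simp only [if_neg hlt]
      have hc2card' : ∀ b ∈ P, ¬ b.card < q → (c2 b).card = b.card := by
        intro b hb hlt
        rw [hc2def]
        simp only [if_neg hlt]
        exact himgcard b hb
      have hc1nec2 : ∀ b ∈ P, c1 b ≠ c2 b := by
        intro b hb hcon
        by_cases hlt : b.card < q
        · have hpin : pick b ∈ c1 b := by
            rw [hc1def]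
            simp only [if_pos hlt]
            exact Finset.mem_insert_of_mem (hpickmem b hb hlt)
          rw [hcon] at hpin
          exact hxpick b hb hlt (hxc2 b hb _ hpin)
        · obtain ⟨J, hJ⟩ := h1 b hb
          have hJin : J ∈ c1 b := by
            rw [hc1def]
            simp only [if_neg hlt]
            exact hJ
          rw [hcon] at hJin
          exact hnotxI b hb J hJ (hxc2 b hb _ hJin)
      have hcnt : ∀ b ∈ P, ((chs b).filter (fun c => j ≤ c.card)).card
          = (if j ≤ b.card + 1 then 1 else 0)
            + (if b.card = q then 1 else if j + 1 ≤ b.card then 1 else 0) := by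
        intro b hb
        have step1 : (chs b).filter (fun c => j ≤ c.card)
            = ({c1 b, c2 b} : Finset _).filter (fun c => j ≤ c.card) := by
          rw [hchsdef]
          simp only
          rw [Finset.filter_filter]
          apply Finset.filter_congr
          intro c _
          constructor
          · exact fun h => h.2
          · exact fun h => ⟨Finset.card_pos.mp (by omega), h⟩
        rw [step1, Finset.card_filter, Finset.sum_pair (hc1nec2 b hb)]
        have hbpos : 1 ≤ b.card := Finset.card_pos.mpr (h1 b hb)
        by_cases hlt : b.card < q
        · rw [hc1card b hb hlt, hc2card b hb hlt]
          have hne : ¬ (b.card = q) := by omega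
          rw [if_neg hne]
          split_ifs <;> omega
        · have heq : b.card = q := le_antisymm (hcard_le b hb) (not_lt.mp hlt)
          rw [hc1card' b hb hlt, hc2card' b hb hlt]
          split_ifs <;> omega
      have hdisjfilt : ∀ b ∈ P, ∀ b' ∈ P, b ≠ b' →
          Disjoint ((chs b).filter (fun c => j ≤ c.card))
            ((chs b').filter (fun c => j ≤ c.card)) := by
        intro b hb b' hb' hne
        rw [Finset.disjoint_left]
        intro c hcmem hcmem'
        have hcb := (Finset.mem_filter.mp hcmem).1
        have hcb' := (Finset.mem_filter.mp hcmem').1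
        obtain ⟨J, hJ⟩ := hchsne b c hcb
        exact hne (h4 b hb b' hb' (J.erase x) (htrace b hb c hcb J hJ)
          (htrace b' hb' c hcb' J hJ))
      rw [Finset.filter_biUnion, Finset.card_biUnion hdisjfilt,
        Finset.sum_congr rfl hcnt, Finset.sum_add_distrib]
      have hS1 : (∑ b ∈ P, if j ≤ b.card + 1 then 1 else 0)
          = modBinom s.card q (eMid s.card (j - 1 - 1)) := by
        rw [← Finset.card_filter]
        rcases Nat.lt_or_ge j 2 with hj2 | hj2
        · have hje : j = 1 := by omega
          subst hje
          have hall : P.filter (fun b => 1 ≤ b.card + 1) = P :=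
            Finset.filter_true_of_mem (fun b hb => by omega)
          have hall2 : P.filter (fun b => 1 ≤ b.card) = P :=
            Finset.filter_true_of_mem (fun b hb => Finset.card_pos.mpr (h1 b hb))
          rw [hall, ← hall2, h6 1 le_rfl hq]
        · have hfc : P.filter (fun b => j ≤ b.card + 1) = P.filter (fun b => j - 1 ≤ b.card) :=
            Finset.filter_congr (fun b _ => by omega)
          rw [hfc, h6 (j-1) (by omega) (by omega)]
      have hS2 : (∑ b ∈ P, if b.card = q then 1 else if j + 1 ≤ b.card then 1 else 0)
          = modBinom s.card q (eMid s.card j) := by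
        rcases Nat.lt_or_ge j q with hjlt | hjge
        · have hterm : ∀ b ∈ P, (if b.card = q then 1 else if j + 1 ≤ b.card then 1 else 0)
              = if j + 1 ≤ b.card then (1:ℕ) else 0 := by
            intro b hb
            have := hcard_le b hb
            split_ifs <;> omega
          rw [Finset.sum_congr rfl hterm, ← Finset.card_filter,
            h6 (j+1) (by omega) (by omega), Nat.add_sub_cancel]
        · have hje : j = q := by omega
          have hterm : ∀ b ∈ P, (if b.card = q then 1 else if j + 1 ≤ b.card then 1 else 0)
              = if q ≤ b.card then (1:ℕ) else 0 := by
            intro b hb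
            have := hcard_le b hb
            split_ifs <;> omega
          rw [Finset.sum_congr rfl hterm, ← Finset.card_filter, h6 q hq le_rfl, hje]
          exact (modBinom_congr (eMid_wrap s.card q hq)).symm
      rw [hS1, hS2, hcardins, modBinom_succ]
      have hj11 : j - 1 + 1 = j := by omega
      rcases eMid_pair s.card (j-1) with ⟨e1, e2⟩ | ⟨e1, e2⟩ <;> rw [e2, e1, hj11] <;> omega

theorem structure_partition (n q : ℕ) [NeZero q] (a : Fin n → ZMod q)
    (ha : ∀ i, IsUnit (a i)) :
    ∃ f : Finset (Fin n) → Fin (modBinom n q (n / 2 : ℕ)),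
      Function.Surjective f ∧
        ∀ I J : Finset (Fin n), f I = f J →
          (∑ i ∈ I, a i) = (∑ i ∈ J, a i) → I = J := by
  classical
  obtain ⟨P, h1, h2, h3, h4, h5, h6⟩ := exists_good_partition n q a ha Finset.univ
  have hq : 1 ≤ q := Nat.pos_of_ne_zero (NeZero.ne q)
  have hcard : P.card = modBinom n q ((n / 2 : ℕ) : ℤ) := by
    have hall : P.filter (fun b => 1 ≤ b.card) = P :=
      Finset.filter_true_of_mem (fun b hb => Finset.card_pos.mpr (h1 b hb))
    have h61 := h6 1 le_rfl hq
    rw [hall] at h61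
    rw [h61, Finset.card_univ, Fintype.card_fin]
    exact congrArg _ (eMid_zero n)
  have hex : ∀ I : Finset (Fin n), ∃ b, b ∈ P ∧ I ∈ b := by
    intro I
    obtain ⟨b, hb, hIb⟩ := h3 I (Finset.subset_univ I)
    exact ⟨b, hb, hIb⟩
  choose blk hblkP hblkI using hex
  refine ⟨fun I => finCongr hcard (P.equivFin ⟨blk I, hblkP I⟩), ?_, ?_⟩
  · intro i
    obtain ⟨I, hI⟩ := h1 (P.equivFin.symm ((finCongr hcard).symm i)).1
      (P.equivFin.symm ((finCongr hcard).symm i)).2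
    refine ⟨I, ?_⟩
    have hblk : (⟨blk I, hblkP I⟩ : {y // y ∈ P})
        = P.equivFin.symm ((finCongr hcard).symm i) :=
      Subtype.ext (h4 (blk I) (hblkP I) _
        (P.equivFin.symm ((finCongr hcard).symm i)).2 I (hblkI I) hI)
    simp only [hblk, Equiv.apply_symm_apply]
  · intro I J hIJ hsum
    have hIJ' : (⟨blk I, hblkP I⟩ : {y // y ∈ P}) = ⟨blk J, hblkP J⟩ :=
      P.equivFin.injective ((finCongr hcard).injective hIJ)
    have hblkeq : blk I = blk J := congrArg Subtype.val hIJ'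
    refine h5 (blk I) (hblkP I) I (hblkI I) J ?_ hsum
    rw [hblkeq]
    exact hblkI J
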